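/- The squared 2-Wasserstein distance between two probability measures on ℝ with finite second moments equals the integral over (0,1) of the squared difference of their quantile functions: W₂²(μ,ν) = ∫₀¹ |F_μ^{-1}(t) − F_ν^{-1}(t)|² dt, where F_μ^{-1}(t) = inf{x : F_μ(x) ≥ t}. -/

import Mathlib

open MeasureTheory

/-- The squared 2-Wasserstein cost: infimum of `∫ dist(x,y)²` over all couplings. -/
noncomputable def W2sq {X : Type*} [MeasurableSpace X] [PseudoMetricSpace X]
    (μ ν : Measure X) : ℝ :=
  sInf {c : ℝ | ∃ γ : Measure (X × X),
    γ.map Prod.fst = μ ∧ γ.map Prod.snd = ν ∧ c = ∫ p, dist p.1 p.2 ^ 2 ∂γ}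

/-- Generalized inverse CDF (quantile function): `F_μ⁻¹(t) = inf {x | F_μ(x) ≥ t}`. -/
noncomputable def invCDF (μ : Measure ℝ) (t : ℝ) : ℝ :=
  sInf {x : ℝ | ENNReal.ofReal t ≤ μ (Set.Iic x)}

open Set Filter ProbabilityTheory
open scoped Topology ENNReal

set_option linter.unusedSectionVars false

section basics
variable (μ : Measure ℝ) [IsProbabilityMeasure μ] {t x : ℝ}

lemma invCDF_set_eq : {x : ℝ | ENNReal.ofReal t ≤ μ (Set.Iic x)} = {x | t ≤ cdf μ x} := by
  ext x
  rw [Set.mem_setOf_eq, Set.mem_setOf_eq, ← ofReal_cdf μ x,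
    ENNReal.ofReal_le_ofReal_iff (cdf_nonneg μ x)]

lemma invCDF_eq_sInf : invCDF μ t = sInf {x | t ≤ cdf μ x} := by
  rw [invCDF, invCDF_set_eq]

lemma cdfS_nonempty (ht1 : t < 1) : {x | t ≤ cdf μ x}.Nonempty := by
  obtain ⟨x, hx⟩ := ((tendsto_cdf_atTop μ).eventually_const_lt ht1).exists
  exact ⟨x, hx.le⟩

lemma cdfS_bddBelow (ht : 0 < t) : BddBelow {x | t ≤ cdf μ x} := by
  obtain ⟨x₀, hx₀⟩ := ((tendsto_cdf_atBot μ).eventually_lt_const ht).exists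
  refine ⟨x₀, fun y hy => ?_⟩
  by_contra hxy
  push_neg at hxy
  exact absurd (le_trans hy ((monotone_cdf μ) hxy.le)) (not_le.2 hx₀)

lemma le_cdf_invCDF (ht : 0 < t) (ht1 : t < 1) : t ≤ cdf μ (invCDF μ t) := by
  rw [invCDF_eq_sInf]
  set a := sInf {x | t ≤ cdf μ x} with ha
  have hIoi : Set.Ioi a ⊆ {x | t ≤ cdf μ x} := by
    intro x hx
    obtain ⟨s, hs, hsx⟩ := (csInf_lt_iff (cdfS_bddBelow μ ht) (cdfS_nonempty μ ht1)).mp hx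
    exact le_trans hs ((monotone_cdf μ) hsx.le)
  have htd : Tendsto (cdf μ) (𝓝[>] a) (𝓝 (cdf μ a)) :=
    ((cdf μ).right_continuous a).mono_left (nhdsWithin_mono a Set.Ioi_subset_Ici_self)
  exact ge_of_tendsto htd (eventually_nhdsWithin_of_forall hIoi)

lemma invCDF_le_iff (ht : 0 < t) (ht1 : t < 1) : invCDF μ t ≤ x ↔ t ≤ cdf μ x := by
  constructor
  · intro h
    exact le_trans (le_cdf_invCDF μ ht ht1) (monotone_cdf μ h)
  · intro h
    rw [invCDF_eq_sInf]
    exact csInf_le (cdfS_bddBelow μ ht) h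

lemma lt_invCDF_iff (ht : 0 < t) (ht1 : t < 1) : x < invCDF μ t ↔ cdf μ x < t := by
  rw [← not_le, ← not_le, invCDF_le_iff μ ht ht1]

lemma monotoneOn_invCDF : MonotoneOn (invCDF μ) (Set.Ioo (0:ℝ) 1) := by
  intro t₁ h₁ t₂ h₂ h12
  rw [invCDF_eq_sInf, invCDF_eq_sInf]
  exact csInf_le_csInf (cdfS_bddBelow μ h₁.1) (cdfS_nonempty μ h₂.2)
    (fun x hx => le_trans h12 hx)

end basics

set_option linter.unusedSectionVars false

noncomputable def L01 : Measure ℝ := (volume : Measure ℝ).restrict (Set.Ioo (0:ℝ) 1)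

instance : IsProbabilityMeasure L01 := by
  rw [L01]
  constructor
  rw [Measure.restrict_apply MeasurableSet.univ]
  simp

section push
variable (μ : Measure ℝ) [IsProbabilityMeasure μ] {t x : ℝ}

lemma aemeasurable_invCDF : AEMeasurable (invCDF μ) L01 :=
  aemeasurable_restrict_of_monotoneOn measurableSet_Ioo (monotoneOn_invCDF μ)

lemma inter_preimage_Iic (x : ℝ) :
    Set.Ioo (0:ℝ) 1 ∩ invCDF μ ⁻¹' (Set.Iic x) = Set.Ioo (0:ℝ) 1 ∩ Set.Iic (cdf μ x) := by
  ext u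
  simp only [Set.mem_inter_iff, Set.mem_Ioo, Set.mem_preimage, Set.mem_Iic]
  constructor
  · rintro ⟨⟨h0, h1⟩, h⟩
    exact ⟨⟨h0, h1⟩, (invCDF_le_iff μ h0 h1).mp h⟩
  · rintro ⟨⟨h0, h1⟩, h⟩
    exact ⟨⟨h0, h1⟩, (invCDF_le_iff μ h0 h1).mpr h⟩

lemma inter_preimage_Ioi (x : ℝ) :
    Set.Ioo (0:ℝ) 1 ∩ invCDF μ ⁻¹' (Set.Ioi x) = Set.Ioo (cdf μ x) 1 := by
  ext u
  simp only [Set.mem_inter_iff, Set.mem_Ioo, Set.mem_preimage, Set.mem_Ioi]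
  constructor
  · rintro ⟨⟨h0, h1⟩, h⟩
    exact ⟨(lt_invCDF_iff μ h0 h1).mp h, h1⟩
  · rintro ⟨hc, h1⟩
    have h0 : 0 < u := lt_of_le_of_lt (cdf_nonneg μ x) hc
    exact ⟨⟨h0, h1⟩, (lt_invCDF_iff μ h0 h1).mpr hc⟩

lemma map_invCDF : L01.map (invCDF μ) = μ := by
  haveI : IsProbabilityMeasure (L01.map (invCDF μ)) :=
    Measure.isProbabilityMeasure_map (aemeasurable_invCDF μ)
  refine Measure.ext_of_Iic _ _ (fun x => ?_)
  rw [Measure.map_apply_of_aemeasurable (aemeasurable_invCDF μ) measurableSet_Iic, L01,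
    Measure.restrict_apply' measurableSet_Ioo, Set.inter_comm, inter_preimage_Iic μ x,
    ← ofReal_cdf μ x]
  set c := cdf μ x with hc
  have hc0 : 0 ≤ c := cdf_nonneg μ x
  have hc1 : c ≤ 1 := cdf_le_one μ x
  rcases lt_or_ge c 1 with h | h
  · have : Set.Ioo (0:ℝ) 1 ∩ Set.Iic c = Set.Ioc 0 c := by
      ext u
      simp only [Set.mem_inter_iff, Set.mem_Ioo, Set.mem_Iic, Set.mem_Ioc]
      constructor
      · rintro ⟨⟨h0, _⟩, hu⟩; exact ⟨h0, hu⟩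
      · rintro ⟨h0, hu⟩; exact ⟨⟨h0, lt_of_le_of_lt hu h⟩, hu⟩
    rw [this, Real.volume_Ioc, sub_zero]
  · have hceq : c = 1 := le_antisymm hc1 h
    have : Set.Ioo (0:ℝ) 1 ∩ Set.Iic c = Set.Ioo 0 1 := by
      rw [hceq]
      exact Set.inter_eq_left.mpr (fun u hu => le_of_lt hu.2)
    rw [this, Real.volume_Ioo, hceq, sub_zero]

lemma integral_invCDF (f : ℝ → ℝ) (hf : AEStronglyMeasurable f μ) :
    ∫ t, f (invCDF μ t) ∂L01 = ∫ x, f x ∂μ := by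
  conv_rhs => rw [← map_invCDF μ]
  rw [integral_map (aemeasurable_invCDF μ)]
  rw [map_invCDF μ]
  exact hf

lemma integrable_comp_invCDF (f : ℝ → ℝ) (hf : Integrable f μ) :
    Integrable (fun t => f (invCDF μ t)) L01 := by
  have h1 : AEStronglyMeasurable f (L01.map (invCDF μ)) := by
    rw [map_invCDF μ]; exact hf.1
  rw [← map_invCDF μ] at hf
  exact (integrable_map_measure h1 (aemeasurable_invCDF μ)).mp hf

end push

/-! ### Hoeffding representation -/

noncomputable def eH (x s : ℝ) : ℝ :=
  Set.indicator (Set.Iio x) (fun _ => (1:ℝ)) s - Set.indicator (Set.Iio (0:ℝ)) (fun _ => (1:ℝ)) s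

lemma eH_of_nonneg {x : ℝ} (hx : 0 ≤ x) :
    eH x = Set.indicator (Set.Ico 0 x) (fun _ => (1:ℝ)) := by
  funext s
  simp only [eH, Set.indicator_apply, Set.mem_Iio, Set.mem_Ico]
  split_ifs <;> simp_all <;> linarith

lemma eH_of_neg {x : ℝ} (hx : x < 0) :
    eH x = fun s => -(Set.indicator (Set.Ico x 0) (fun _ => (1:ℝ)) s) := by
  funext s
  simp only [eH, Set.indicator_apply, Set.mem_Iio, Set.mem_Ico]
  split_ifs <;> simp_all <;> linarith

lemma integrable_indicator_Ico (a b : ℝ) :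
    Integrable (Set.indicator (Set.Ico a b) (fun _ => (1:ℝ))) (volume : Measure ℝ) := by
  rw [integrable_indicator_iff measurableSet_Ico]
  exact integrableOn_const (by rw [Real.volume_Ico]; exact ENNReal.ofReal_ne_top)

lemma integrable_eH (x : ℝ) : Integrable (eH x) (volume : Measure ℝ) := by
  rcases le_or_gt 0 x with hx | hx
  · rw [eH_of_nonneg hx]; exact integrable_indicator_Ico 0 x
  · rw [eH_of_neg hx]; exact (integrable_indicator_Ico x 0).neg

lemma integral_eH (x : ℝ) : ∫ s, eH x s ∂(volume : Measure ℝ) = x := by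
  rcases le_or_gt 0 x with hx | hx
  · rw [eH_of_nonneg hx, integral_indicator_const (1:ℝ) measurableSet_Ico]
    simp [Real.volume_Ico, ENNReal.toReal_ofReal hx, hx]
  · rw [eH_of_neg hx, integral_neg, integral_indicator_const (1:ℝ) measurableSet_Ico]
    simp only [measureReal_def, Real.volume_Ico, sub_zero, smul_eq_mul, mul_one]
    rw [ENNReal.toReal_ofReal (by linarith)]
    ring

lemma lintegral_nnnorm_eH (x : ℝ) :
    ∫⁻ s, (‖eH x s‖₊ : ℝ≥0∞) ∂(volume : Measure ℝ) = ENNReal.ofReal |x| := by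
  rcases le_or_gt 0 x with hx | hx
  · rw [eH_of_nonneg hx]
    have h : ∀ s, (‖Set.indicator (Set.Ico 0 x) (fun _ => (1:ℝ)) s‖₊ : ℝ≥0∞)
        = Set.indicator (Set.Ico 0 x) (fun _ => (1:ℝ≥0∞)) s := by
      intro s
      simp only [Set.indicator_apply]
      split_ifs <;> simp
    rw [lintegral_congr h, lintegral_indicator measurableSet_Ico]
    simp [Real.volume_Ico, abs_of_nonneg hx]
  · rw [eH_of_neg hx]
    have h : ∀ s, (‖-(Set.indicator (Set.Ico x 0) (fun _ => (1:ℝ)) s)‖₊ : ℝ≥0∞)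
        = Set.indicator (Set.Ico x 0) (fun _ => (1:ℝ≥0∞)) s := by
      intro s
      simp only [Set.indicator_apply]
      split_ifs <;> simp
    rw [lintegral_congr h, lintegral_indicator measurableSet_Ico]
    simp [Real.volume_Ico, abs_of_neg hx]

lemma measurable_eH_pair : Measurable (fun p : ℝ × ℝ => eH p.1 p.2) := by
  have h1 : (fun p : ℝ × ℝ => Set.indicator (Set.Iio p.1) (fun _ => (1:ℝ)) p.2)
      = Set.indicator {q : ℝ × ℝ | q.2 < q.1} (fun _ => (1:ℝ)) := by
    funext p
    simp only [Set.indicator_apply, Set.mem_Iio, Set.mem_setOf_eq]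
  have h2 : Measurable (Set.indicator {q : ℝ × ℝ | q.2 < q.1} (fun _ => (1:ℝ))) :=
    measurable_const.indicator (measurableSet_lt measurable_snd measurable_fst)
  have h3 : Measurable fun p : ℝ × ℝ => Set.indicator (Set.Iio (0:ℝ)) (fun _ => (1:ℝ)) p.2 :=
    (measurable_const.indicator measurableSet_Iio).comp measurable_snd
  have : (fun p : ℝ × ℝ => eH p.1 p.2) = fun p : ℝ × ℝ =>
      Set.indicator {q : ℝ × ℝ | q.2 < q.1} (fun _ => (1:ℝ)) p
        - Set.indicator (Set.Iio (0:ℝ)) (fun _ => (1:ℝ)) p.2 := by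
    funext p
    rw [eH, ← h1]
  rw [this]
  exact h2.sub h3

lemma indicator_Iio_eq_Ioi (x s : ℝ) :
    Set.indicator (Set.Iio x) (fun _ => (1:ℝ)) s = Set.indicator (Set.Ioi s) (fun _ => (1:ℝ)) x := by
  simp only [Set.indicator_apply, Set.mem_Iio, Set.mem_Ioi]

/-! ### Couplings -/

noncomputable def σvol : Measure (ℝ × ℝ) := (volume : Measure ℝ).prod volume

noncomputable def ψH (γ : Measure (ℝ × ℝ)) (μ ν : Measure ℝ) (s t : ℝ) : ℝ :=
  (γ (Set.Ioi s ×ˢ Set.Ioi t)).toReal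
  - Set.indicator (Set.Iio (0:ℝ)) (fun _ => (1:ℝ)) t * (μ (Set.Ioi s)).toReal
  - Set.indicator (Set.Iio (0:ℝ)) (fun _ => (1:ℝ)) s * (ν (Set.Ioi t)).toReal
  + Set.indicator (Set.Iio (0:ℝ)) (fun _ => (1:ℝ)) s
      * Set.indicator (Set.Iio (0:ℝ)) (fun _ => (1:ℝ)) t

section coupling
variable {μ ν : Measure ℝ} [IsProbabilityMeasure μ] [IsProbabilityMeasure ν]
  {γ : Measure (ℝ × ℝ)}

lemma isProbabilityMeasure_coupling (h1 : γ.map Prod.fst = μ) : IsProbabilityMeasure γ := by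
  constructor
  have h := congrArg (fun m : Measure ℝ => m Set.univ) h1
  simpa [Measure.map_apply measurable_fst MeasurableSet.univ] using h

lemma coupling_fst (h1 : γ.map Prod.fst = μ) (s : ℝ) :
    γ (Set.Ioi s ×ˢ Set.univ) = μ (Set.Ioi s) := by
  rw [Set.prod_univ, ← Measure.map_apply measurable_fst measurableSet_Ioi, h1]

lemma coupling_snd (h2 : γ.map Prod.snd = ν) (t : ℝ) :
    γ (Set.univ ×ˢ Set.Ioi t) = ν (Set.Ioi t) := by
  rw [Set.univ_prod, ← Measure.map_apply measurable_snd measurableSet_Ioi, h2]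

lemma integral_eH_mul [IsProbabilityMeasure γ]
    (h1 : γ.map Prod.fst = μ) (h2 : γ.map Prod.snd = ν) (s t : ℝ) :
    ∫ p : ℝ × ℝ, eH p.1 s * eH p.2 t ∂γ = ψH γ μ ν s t := by
  set cs := Set.indicator (Set.Iio (0:ℝ)) (fun _ => (1:ℝ)) s with hcs
  set ct := Set.indicator (Set.Iio (0:ℝ)) (fun _ => (1:ℝ)) t with hct
  have key : ∀ p : ℝ × ℝ, eH p.1 s * eH p.2 t
      = Set.indicator (Set.Ioi s ×ˢ Set.Ioi t) (fun _ => (1:ℝ)) p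
        - ct * Set.indicator (Set.Ioi s ×ˢ Set.univ) (fun _ => (1:ℝ)) p
        - cs * Set.indicator (Set.univ ×ˢ Set.Ioi t) (fun _ => (1:ℝ)) p
        + cs * ct := by
    intro p
    rw [eH, eH, indicator_Iio_eq_Ioi p.1 s, indicator_Iio_eq_Ioi p.2 t, ← hcs, ← hct]
    have hA : Set.indicator (Set.Ioi s) (fun _ => (1:ℝ)) p.1
        * Set.indicator (Set.Ioi t) (fun _ => (1:ℝ)) p.2
        = Set.indicator (Set.Ioi s ×ˢ Set.Ioi t) (fun _ => (1:ℝ)) p := by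
      simp only [Set.indicator_apply, Set.mem_Ioi, Set.mem_prod]
      split_ifs <;> simp_all
    have hB : Set.indicator (Set.Ioi s) (fun _ => (1:ℝ)) p.1
        = Set.indicator (Set.Ioi s ×ˢ Set.univ) (fun _ => (1:ℝ)) p := by
      simp only [Set.indicator_apply, Set.mem_Ioi, Set.mem_prod, Set.mem_univ, and_true]
    have hC : Set.indicator (Set.Ioi t) (fun _ => (1:ℝ)) p.2
        = Set.indicator (Set.univ ×ˢ Set.Ioi t) (fun _ => (1:ℝ)) p := by
      simp only [Set.indicator_apply, Set.mem_Ioi, Set.mem_prod, Set.mem_univ, true_and]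
    rw [← hA, ← hB, ← hC]
    ring
  rw [integral_congr_ae (Filter.Eventually.of_forall key)]
  have m1 : MeasurableSet (Set.Ioi s ×ˢ Set.Ioi t) := measurableSet_Ioi.prod measurableSet_Ioi
  have m2 : MeasurableSet (Set.Ioi s ×ˢ (Set.univ : Set ℝ)) :=
    measurableSet_Ioi.prod MeasurableSet.univ
  have m3 : MeasurableSet ((Set.univ : Set ℝ) ×ˢ Set.Ioi t) :=
    MeasurableSet.univ.prod measurableSet_Ioi
  have i1 : Integrable (Set.indicator (Set.Ioi s ×ˢ Set.Ioi t) (fun _ => (1:ℝ))) γ :=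
    (integrable_const (1:ℝ)).indicator m1
  have i2 : Integrable (fun p => ct * Set.indicator (Set.Ioi s ×ˢ Set.univ) (fun _ => (1:ℝ)) p) γ :=
    ((integrable_const (1:ℝ)).indicator m2).const_mul ct
  have i3 : Integrable (fun p => cs * Set.indicator (Set.univ ×ˢ Set.Ioi t) (fun _ => (1:ℝ)) p) γ :=
    ((integrable_const (1:ℝ)).indicator m3).const_mul cs
  have i12 : Integrable (fun p => Set.indicator (Set.Ioi s ×ˢ Set.Ioi t) (fun _ => (1:ℝ)) p
      - ct * Set.indicator (Set.Ioi s ×ˢ Set.univ) (fun _ => (1:ℝ)) p) γ := i1.sub i2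
  have i123 : Integrable (fun p => Set.indicator (Set.Ioi s ×ˢ Set.Ioi t) (fun _ => (1:ℝ)) p
      - ct * Set.indicator (Set.Ioi s ×ˢ Set.univ) (fun _ => (1:ℝ)) p
      - cs * Set.indicator (Set.univ ×ˢ Set.Ioi t) (fun _ => (1:ℝ)) p) γ := i12.sub i3
  rw [integral_add i123 (integrable_const (cs * ct)),
    integral_sub i12 i3, integral_sub i1 i2,
    integral_const_mul ct _, integral_const_mul cs _,
    integral_indicator_const (1:ℝ) m1, integral_indicator_const (1:ℝ) m2,
    integral_indicator_const (1:ℝ) m3, integral_const]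
  simp only [measureReal_def]
  rw [coupling_fst h1 s, coupling_snd h2 t]
  simp only [measure_univ, ENNReal.toReal_one, smul_eq_mul, mul_one, one_smul, ψH]
  ring

end coupling

instance : SigmaFinite σvol := by unfold σvol; infer_instance

section fubini
variable {μ ν : Measure ℝ} [IsProbabilityMeasure μ] [IsProbabilityMeasure ν]
  {γ : Measure (ℝ × ℝ)}

lemma measurable_FH : Measurable
    (Function.uncurry fun (p st : ℝ × ℝ) => eH p.1 st.1 * eH p.2 st.2) := by
  have h1 : Measurable fun q : (ℝ × ℝ) × ℝ × ℝ => eH q.1.1 q.2.1 :=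
    measurable_eH_pair.comp ((measurable_fst.comp measurable_fst).prodMk
      (measurable_fst.comp measurable_snd))
  have h2 : Measurable fun q : (ℝ × ℝ) × ℝ × ℝ => eH q.1.2 q.2.2 :=
    measurable_eH_pair.comp ((measurable_snd.comp measurable_fst).prodMk
      (measurable_snd.comp measurable_snd))
  exact h1.mul h2

lemma measurable_eH_left (x : ℝ) : Measurable (eH x) :=
  measurable_eH_pair.comp (measurable_const.prodMk measurable_id)

lemma integrable_FH [IsProbabilityMeasure γ]
    (hxy : Integrable (fun p : ℝ × ℝ => p.1 * p.2) γ) :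
    Integrable (Function.uncurry fun (p st : ℝ × ℝ) => eH p.1 st.1 * eH p.2 st.2)
      (γ.prod σvol) := by
  refine ⟨measurable_FH.aestronglyMeasurable, ?_⟩
  rw [HasFiniteIntegral, lintegral_prod _ (measurable_FH.enorm.aemeasurable)]
  have inner : ∀ p : ℝ × ℝ, (∫⁻ st : ℝ × ℝ, ‖eH p.1 st.1 * eH p.2 st.2‖₊ ∂σvol)
      = (‖p.1 * p.2‖₊ : ℝ≥0∞) := by
    intro p
    have : ∀ st : ℝ × ℝ, ((‖eH p.1 st.1 * eH p.2 st.2‖₊ : ℝ≥0∞))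
        = (‖eH p.1 st.1‖₊ : ℝ≥0∞) * (‖eH p.2 st.2‖₊ : ℝ≥0∞) := by
      intro st; rw [nnnorm_mul, ENNReal.coe_mul]
    rw [lintegral_congr this, σvol,
      lintegral_prod_mul ((measurable_eH_left p.1).nnnorm.coe_nnreal_ennreal.aemeasurable)
        ((measurable_eH_left p.2).nnnorm.coe_nnreal_ennreal.aemeasurable),
      lintegral_nnnorm_eH, lintegral_nnnorm_eH, ← ENNReal.ofReal_mul (abs_nonneg _),
      ← abs_mul, ← Real.enorm_eq_ofReal_abs, enorm_eq_nnnorm]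
  simp only [Function.uncurry_apply_pair, enorm_eq_nnnorm]
  rw [lintegral_congr inner]
  exact hxy.2

lemma integral_mul_coupling [IsProbabilityMeasure γ]
    (h1 : γ.map Prod.fst = μ) (h2 : γ.map Prod.snd = ν)
    (hxy : Integrable (fun p : ℝ × ℝ => p.1 * p.2) γ) :
    ∫ p : ℝ × ℝ, p.1 * p.2 ∂γ = ∫ st : ℝ × ℝ, ψH γ μ ν st.1 st.2 ∂σvol := by
  have step1 : ∀ p : ℝ × ℝ, p.1 * p.2 = ∫ st : ℝ × ℝ, eH p.1 st.1 * eH p.2 st.2 ∂σvol := by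
    intro p
    rw [σvol, integral_prod_mul (eH p.1) (eH p.2), integral_eH, integral_eH]
  calc ∫ p : ℝ × ℝ, p.1 * p.2 ∂γ
      = ∫ p : ℝ × ℝ, ∫ st : ℝ × ℝ, eH p.1 st.1 * eH p.2 st.2 ∂σvol ∂γ :=
        integral_congr_ae (Filter.Eventually.of_forall step1)
    _ = ∫ st : ℝ × ℝ, ∫ p : ℝ × ℝ, eH p.1 st.1 * eH p.2 st.2 ∂γ ∂σvol :=
        integral_integral_swap (integrable_FH hxy)
    _ = ∫ st : ℝ × ℝ, ψH γ μ ν st.1 st.2 ∂σvol :=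
        integral_congr_ae (Filter.Eventually.of_forall fun st =>
          integral_eH_mul h1 h2 st.1 st.2)

lemma integrable_psi [IsProbabilityMeasure γ]
    (h1 : γ.map Prod.fst = μ) (h2 : γ.map Prod.snd = ν)
    (hxy : Integrable (fun p : ℝ × ℝ => p.1 * p.2) γ) :
    Integrable (fun st : ℝ × ℝ => ψH γ μ ν st.1 st.2) σvol := by
  have h := (integrable_FH (γ := γ) hxy).integral_prod_right
  refine h.congr (Filter.Eventually.of_forall fun st => ?_)
  exact integral_eH_mul h1 h2 st.1 st.2

end fubini

/-! ### The quantile coupling -/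

noncomputable def couplingQ (μ ν : Measure ℝ) : Measure (ℝ × ℝ) :=
  L01.map (fun u => (invCDF μ u, invCDF ν u))

section quantileCoupling
variable (μ ν : Measure ℝ) [IsProbabilityMeasure μ] [IsProbabilityMeasure ν]

lemma aem_pairQ : AEMeasurable (fun u => (invCDF μ u, invCDF ν u)) L01 :=
  (aemeasurable_invCDF μ).prodMk (aemeasurable_invCDF ν)

instance : IsProbabilityMeasure (couplingQ μ ν) := by
  rw [couplingQ]
  exact Measure.isProbabilityMeasure_map (aem_pairQ μ ν)

lemma couplingQ_fst : (couplingQ μ ν).map Prod.fst = μ := by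
  rw [couplingQ, AEMeasurable.map_map_of_aemeasurable measurable_fst.aemeasurable (aem_pairQ μ ν)]
  have : (Prod.fst ∘ fun u => (invCDF μ u, invCDF ν u)) = invCDF μ := rfl
  rw [this, map_invCDF μ]

lemma couplingQ_snd : (couplingQ μ ν).map Prod.snd = ν := by
  rw [couplingQ, AEMeasurable.map_map_of_aemeasurable measurable_snd.aemeasurable (aem_pairQ μ ν)]
  have : (Prod.snd ∘ fun u => (invCDF μ u, invCDF ν u)) = invCDF ν := rfl
  rw [this, map_invCDF ν]

lemma measure_Ioi_eq_ofReal (s : ℝ) : μ (Set.Ioi s) = ENNReal.ofReal (1 - cdf μ s) := by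
  have h := measure_compl (μ := μ) (s := Set.Iic s) measurableSet_Iic (measure_ne_top μ _)
  rw [Set.compl_Iic] at h
  rw [h, measure_univ, ← ofReal_cdf μ s, ← ENNReal.ofReal_one,
    ← ENNReal.ofReal_sub 1 (cdf_nonneg μ s)]

lemma couplingQ_rect (s t : ℝ) :
    couplingQ μ ν (Set.Ioi s ×ˢ Set.Ioi t) = min (μ (Set.Ioi s)) (ν (Set.Ioi t)) := by
  rw [couplingQ, Measure.map_apply_of_aemeasurable (aem_pairQ μ ν)
      (measurableSet_Ioi.prod measurableSet_Ioi), Set.mk_preimage_prod, L01,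
    Measure.restrict_apply' measurableSet_Ioo]
  have hset : invCDF μ ⁻¹' Set.Ioi s ∩ invCDF ν ⁻¹' Set.Ioi t ∩ Set.Ioo (0:ℝ) 1
      = Set.Ioo (max (cdf μ s) (cdf ν t)) 1 := by
    have h₁ := inter_preimage_Ioi μ s
    have h₂ := inter_preimage_Ioi ν t
    ext u
    have e1 := Set.ext_iff.mp h₁ u
    have e2 := Set.ext_iff.mp h₂ u
    simp only [Set.mem_inter_iff, Set.mem_preimage, Set.mem_Ioo, Set.mem_Ioi,
      max_lt_iff, lt_max_iff] at *
    constructor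
    · rintro ⟨⟨hs', ht'⟩, h01⟩
      exact ⟨⟨(e1.mp ⟨h01, hs'⟩).1, (e2.mp ⟨h01, ht'⟩).1⟩, h01.2⟩
    · rintro ⟨⟨hs', ht'⟩, h1'⟩
      have m1 := e1.mpr ⟨hs', h1'⟩
      have m2 := e2.mpr ⟨ht', h1'⟩
      exact ⟨⟨m1.2, m2.2⟩, m1.1⟩
  rw [hset, Real.volume_Ioo, measure_Ioi_eq_ofReal μ s, measure_Ioi_eq_ofReal ν t]
  rcases le_total (cdf μ s) (cdf ν t) with h | h
  · rw [max_eq_right h, min_eq_right (ENNReal.ofReal_le_ofReal (by linarith))]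
  · rw [max_eq_left h, min_eq_left (ENNReal.ofReal_le_ofReal (by linarith))]

variable {μ ν}

lemma rect_le_min {γ : Measure (ℝ × ℝ)} (h1 : γ.map Prod.fst = μ) (h2 : γ.map Prod.snd = ν)
    (s t : ℝ) : γ (Set.Ioi s ×ˢ Set.Ioi t) ≤ min (μ (Set.Ioi s)) (ν (Set.Ioi t)) := by
  refine le_min ?_ ?_
  · rw [← coupling_fst h1 s]
    exact measure_mono (Set.prod_mono le_rfl (Set.subset_univ _))
  · rw [← coupling_snd h2 t]
    exact measure_mono (Set.prod_mono (Set.subset_univ _) le_rfl)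

lemma psi_le_psiQ {γ : Measure (ℝ × ℝ)} (h1 : γ.map Prod.fst = μ) (h2 : γ.map Prod.snd = ν)
    (s t : ℝ) : ψH γ μ ν s t ≤ ψH (couplingQ μ ν) μ ν s t := by
  have hle : γ (Set.Ioi s ×ˢ Set.Ioi t) ≤ couplingQ μ ν (Set.Ioi s ×ˢ Set.Ioi t) := by
    rw [couplingQ_rect μ ν s t]
    exact rect_le_min h1 h2 s t
  have hne : couplingQ μ ν (Set.Ioi s ×ˢ Set.Ioi t) ≠ ⊤ := measure_ne_top _ _
  have := ENNReal.toReal_mono hne hle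
  unfold ψH
  linarith

end quantileCoupling

/-! ### Cost identity and main theorem -/

section cost
variable {μ ν : Measure ℝ} [IsProbabilityMeasure μ] [IsProbabilityMeasure ν]
  {γ : Measure (ℝ × ℝ)}

lemma integrable_fst_sq (h1 : γ.map Prod.fst = μ) (hμ : Integrable (fun x => x ^ 2) μ) :
    Integrable (fun p : ℝ × ℝ => p.1 ^ 2) γ := by
  rw [← h1] at hμ
  exact (integrable_map_measure ((continuous_pow 2).measurable.aestronglyMeasurable)
    measurable_fst.aemeasurable).mp hμ

lemma integrable_snd_sq (h2 : γ.map Prod.snd = ν) (hν : Integrable (fun x => x ^ 2) ν) :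
    Integrable (fun p : ℝ × ℝ => p.2 ^ 2) γ := by
  rw [← h2] at hν
  exact (integrable_map_measure ((continuous_pow 2).measurable.aestronglyMeasurable)
    measurable_snd.aemeasurable).mp hν

lemma integral_fst_sq (h1 : γ.map Prod.fst = μ) :
    ∫ p : ℝ × ℝ, p.1 ^ 2 ∂γ = ∫ x, x ^ 2 ∂μ := by
  rw [← h1, integral_map measurable_fst.aemeasurable
    ((continuous_pow 2).measurable.aestronglyMeasurable)]

lemma integral_snd_sq (h2 : γ.map Prod.snd = ν) :
    ∫ p : ℝ × ℝ, p.2 ^ 2 ∂γ = ∫ x, x ^ 2 ∂ν := by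
  rw [← h2, integral_map measurable_snd.aemeasurable
    ((continuous_pow 2).measurable.aestronglyMeasurable)]

lemma integrable_mul_of_coupling (h1 : γ.map Prod.fst = μ) (h2 : γ.map Prod.snd = ν)
    (hμ : Integrable (fun x => x ^ 2) μ) (hν : Integrable (fun x => x ^ 2) ν) :
    Integrable (fun p : ℝ × ℝ => p.1 * p.2) γ := by
  have hf := integrable_fst_sq h1 hμ
  have hs := integrable_snd_sq h2 hν
  have hfs : Integrable (fun p : ℝ × ℝ => p.1 ^ 2 + p.2 ^ 2) γ := hf.add hs
  refine hfs.mono ((measurable_fst.mul measurable_snd).aestronglyMeasurable)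
    (Filter.Eventually.of_forall fun p => ?_)
  simp only [Real.norm_eq_abs, abs_mul]
  nlinarith [sq_nonneg (|p.1| - |p.2|), sq_abs p.1, sq_abs p.2,
    le_abs_self (p.1 ^ 2 + p.2 ^ 2), abs_nonneg p.1, abs_nonneg p.2]

lemma cost_eq [IsProbabilityMeasure γ] (h1 : γ.map Prod.fst = μ) (h2 : γ.map Prod.snd = ν)
    (hμ : Integrable (fun x => x ^ 2) μ) (hν : Integrable (fun x => x ^ 2) ν) :
    ∫ p : ℝ × ℝ, dist p.1 p.2 ^ 2 ∂γ
      = ∫ x, x ^ 2 ∂μ + ∫ x, x ^ 2 ∂ν - 2 * ∫ st : ℝ × ℝ, ψH γ μ ν st.1 st.2 ∂σvol := by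
  have hf := integrable_fst_sq h1 hμ
  have hs := integrable_snd_sq h2 hν
  have hxy := integrable_mul_of_coupling h1 h2 hμ hν
  have key : ∀ p : ℝ × ℝ, dist p.1 p.2 ^ 2 = p.1 ^ 2 + p.2 ^ 2 - 2 * (p.1 * p.2) := by
    intro p
    rw [Real.dist_eq, sq_abs]
    ring
  have hfs : Integrable (fun p : ℝ × ℝ => p.1 ^ 2 + p.2 ^ 2) γ := hf.add hs
  rw [integral_congr_ae (Filter.Eventually.of_forall key),
    integral_sub hfs ((hxy).const_mul 2), integral_add hf hs,
    integral_const_mul 2 _, integral_fst_sq h1, integral_snd_sq h2,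
    integral_mul_coupling h1 h2 hxy]

lemma cost_ge_costQ [IsProbabilityMeasure γ] (h1 : γ.map Prod.fst = μ) (h2 : γ.map Prod.snd = ν)
    (hμ : Integrable (fun x => x ^ 2) μ) (hν : Integrable (fun x => x ^ 2) ν) :
    ∫ p : ℝ × ℝ, dist p.1 p.2 ^ 2 ∂(couplingQ μ ν) ≤ ∫ p : ℝ × ℝ, dist p.1 p.2 ^ 2 ∂γ := by
  have hxyγ := integrable_mul_of_coupling h1 h2 hμ hν
  have hxyQ := integrable_mul_of_coupling (couplingQ_fst μ ν) (couplingQ_snd μ ν) hμ hν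
  have hint : ∫ st : ℝ × ℝ, ψH γ μ ν st.1 st.2 ∂σvol
      ≤ ∫ st : ℝ × ℝ, ψH (couplingQ μ ν) μ ν st.1 st.2 ∂σvol := by
    refine integral_mono (integrable_psi h1 h2 hxyγ)
      (integrable_psi (couplingQ_fst μ ν) (couplingQ_snd μ ν) hxyQ) (fun st => ?_)
    exact psi_le_psiQ h1 h2 st.1 st.2
  rw [cost_eq h1 h2 hμ hν, cost_eq (couplingQ_fst μ ν) (couplingQ_snd μ ν) hμ hν]
  linarith

end cost


/-- 1D formula: `W₂²(μ,ν) = ∫₀¹ |F_μ⁻¹(t) − F_ν⁻¹(t)|² dt` for probability measures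
on ℝ with finite second moments. -/
theorem stmt_1 (μ ν : Measure ℝ) [IsProbabilityMeasure μ] [IsProbabilityMeasure ν]
    (hμ : Integrable (fun x => x ^ 2) μ) (hν : Integrable (fun x => x ^ 2) ν) :
    W2sq μ ν = ∫ t in Set.Ioo (0 : ℝ) 1, |invCDF μ t - invCDF ν t| ^ 2 := by
  have hmeas : AEStronglyMeasurable (fun p : ℝ × ℝ => dist p.1 p.2 ^ 2) (couplingQ μ ν) :=
    (((measurable_fst.dist measurable_snd).pow_const 2)).aestronglyMeasurable
  have hRHS : ∫ t in Set.Ioo (0 : ℝ) 1, |invCDF μ t - invCDF ν t| ^ 2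
      = ∫ p : ℝ × ℝ, dist p.1 p.2 ^ 2 ∂(couplingQ μ ν) := by
    rw [couplingQ, integral_map (aem_pairQ μ ν) (by rw [← couplingQ]; exact hmeas)]
    rw [show ∫ t in Set.Ioo (0 : ℝ) 1, |invCDF μ t - invCDF ν t| ^ 2
        = ∫ t, |invCDF μ t - invCDF ν t| ^ 2 ∂L01 from by rw [L01]]
    refine integral_congr_ae (Filter.Eventually.of_forall fun u => ?_)
    simp only [Real.dist_eq]
  rw [W2sq]
  refine IsLeast.csInf_eq ⟨⟨couplingQ μ ν, couplingQ_fst μ ν, couplingQ_snd μ ν, hRHS⟩, ?_⟩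
  rintro c ⟨γ, h1, h2, hc⟩
  haveI := isProbabilityMeasure_coupling h1
  rw [hRHS, hc]
  exact cost_ge_costQ h1 h2 hμ hν
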